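/- Let G be a finite non-abelian group. If the non-commuting graph of G has genus at most 1, then k(G) ≥ |G| − 5, where k(G) is the number of conjugacy classes of G. -/

import Mathlib

open SimpleGraph

/-- The non-commuting graph of a group `G`: vertices are the non-central elements,
two vertices are adjacent iff they do not commute. -/
def nonCommGraph (G : Type*) [Group G] : SimpleGraph {x : G // x ∉ Subgroup.center G} where
  Adj x y := (x : G) * y ≠ (y : G) * x
  symm := ⟨fun _ _ h he => h he.symm⟩
  loopless := ⟨fun _ h => h rfl⟩

/-- A rotation system (combinatorial orientable embedding) of a graph: a permutation of
the darts preserving tails and acting with a single cycle on the darts at each vertex. -/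
structure RotationSystem {V : Type*} (Γ : SimpleGraph V) where
  rot : Equiv.Perm Γ.Dart
  tail_eq : ∀ d, (rot d).toProd.1 = d.toProd.1
  cyclic : ∀ d e : Γ.Dart, d.toProd.1 = e.toProd.1 → ∃ k : ℕ, (rot ^ k) d = e

/-- The number of faces of the embedding determined by a rotation system: the number of
orbits of the face-tracing map `d ↦ rot d.symm`, plus one face for each isolated vertex. -/
noncomputable def RotationSystem.numFaces {V : Type*} {Γ : SimpleGraph V}
    (R : RotationSystem Γ) : ℕ :=
  Nat.card (Quotient (Relation.EqvGen.setoid (fun d e : Γ.Dart => R.rot d.symm = e)))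
    + Nat.card {v : V // ∀ w, ¬ Γ.Adj v w}

/-- The (orientable) genus of a graph: the least `g` such that some rotation system
satisfies the Euler formula bound `E + 2c ≤ V + F + 2g`
(i.e. `V - E + F = 2c - 2·(sum of component genera)` with total component genus `≤ g`). -/
noncomputable def genus {V : Type*} (Γ : SimpleGraph V) : ℕ :=
  sInf {g : ℕ | ∃ R : RotationSystem Γ,
    (Nat.card Γ.edgeSet : ℤ) + 2 * Nat.card Γ.ConnectedComponent
      ≤ Nat.card V + R.numFaces + 2 * g}

/-! ### Auxiliary lemmas -/

section Rotate

open Fin.NatCast Fin.CommRing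

lemma NCG.finRotate_pow_apply (n k : ℕ) (i : Fin (n+1)) :
    ((finRotate (n+1)) ^ k) i = i + (k : Fin (n+1)) := by
  induction k with
  | zero => simp
  | succ k ih =>
    rw [pow_succ', Equiv.Perm.mul_apply, ih, finRotate_succ_apply]
    push_cast
    ring

lemma NCG.finRotate_trans (n : ℕ) (i j : Fin n) : ∃ k : ℕ, ((finRotate n) ^ k) i = j := by
  cases n with
  | zero => exact i.elim0
  | succ n =>
    refine ⟨(j - i).val, ?_⟩
    rw [NCG.finRotate_pow_apply, Fin.cast_val_eq_self, add_sub_cancel]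

lemma NCG.conj_pow_apply {α β : Type*} (E : β ≃ α) (τ : Equiv.Perm β) (k : ℕ) (a : α) :
    (((E.symm.trans τ).trans E : Equiv.Perm α) ^ k) a = E ((τ ^ k) (E.symm a)) := by
  induction k with
  | zero => simp
  | succ k ih =>
    rw [pow_succ', Equiv.Perm.mul_apply, ih, pow_succ', Equiv.Perm.mul_apply]
    simp [Equiv.trans_apply]

lemma NCG.exists_transitive_perm (α : Type*) [Finite α] :
    ∃ π : Equiv.Perm α, ∀ a b : α, ∃ k : ℕ, (π ^ k) a = b := by
  classical
  have : Fintype α := Fintype.ofFinite α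
  let e := Fintype.equivFin α
  refine ⟨(e.trans (finRotate _)).trans e.symm, fun a b => ?_⟩
  obtain ⟨k, hk⟩ := NCG.finRotate_trans _ (e a) (e b)
  refine ⟨k, ?_⟩
  have := NCG.conj_pow_apply (E := e.symm) (τ := finRotate (Fintype.card α)) k a
  have h2 : (e.trans (finRotate _)).trans e.symm
      = ((e.symm.symm.trans (finRotate (Fintype.card α))).trans e.symm) := by
    ext x; simp
  rw [h2, this]
  simp only [Equiv.symm_symm]
  rw [hk]
  simp

lemma NCG.sigmaCongrRight_pow_apply {β : Type*} {F : β → Type*} (σ : ∀ b, Equiv.Perm (F b))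
    (k : ℕ) (b : β) (x : F b) :
    ((Equiv.sigmaCongrRight σ : Equiv.Perm (Σ b, F b)) ^ k) ⟨b, x⟩ = ⟨b, ((σ b) ^ k) x⟩ := by
  induction k with
  | zero => simp
  | succ k ih =>
    rw [pow_succ', Equiv.Perm.mul_apply, ih, pow_succ', Equiv.Perm.mul_apply]
    rfl

lemma NCG.exists_fiber_perm {α β : Type*} [Finite α] (f : α → β) :
    ∃ π : Equiv.Perm α, (∀ a, f (π a) = f a) ∧
      ∀ a b : α, f a = f b → ∃ k : ℕ, (π ^ k) a = b := by
  classical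
  choose σ hσ using fun b => NCG.exists_transitive_perm {a // f a = b}
  let E : (Σ b, {a // f a = b}) ≃ α := Equiv.sigmaFiberEquiv f
  let τ : Equiv.Perm (Σ b, {a // f a = b}) := Equiv.sigmaCongrRight σ
  refine ⟨(E.symm.trans τ).trans E, fun a => ?_, fun a b hab => ?_⟩
  · show f (E (τ (E.symm a))) = f a
    have : E.symm a = ⟨f a, ⟨a, rfl⟩⟩ := rfl
    rw [this]
    show f ((σ (f a) ⟨a, rfl⟩).val) = f a
    exact (σ (f a) ⟨a, rfl⟩).2
  · obtain ⟨k, hk⟩ := hσ (f a) ⟨a, rfl⟩ ⟨b, hab.symm⟩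
    refine ⟨k, ?_⟩
    rw [NCG.conj_pow_apply]
    have : E.symm a = ⟨f a, ⟨a, rfl⟩⟩ := rfl
    rw [this]
    show E ((τ ^ k) ⟨f a, ⟨a, rfl⟩⟩) = b
    rw [NCG.sigmaCongrRight_pow_apply, hk]
    rfl

end Rotate

section Orbits

lemma NCG.three_mul_card_quotient_le {α : Type*} [Fintype α] (f : Equiv.Perm α)
    (h1 : ∀ a, f a ≠ a) (h2 : ∀ a, f (f a) ≠ a) :
    3 * Nat.card (Quotient (Relation.EqvGen.setoid (fun a b : α => f a = b))) ≤ Nat.card α := by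
  classical
  set s := Relation.EqvGen.setoid (fun a b : α => f a = b) with hs
  have hrel : ∀ a : α, (Quotient.mk s a) = Quotient.mk s (f a) := by
    intro a
    exact Quotient.sound (Relation.EqvGen.rel a (f a) rfl)
  rw [Nat.card_eq_fintype_card, Nat.card_eq_fintype_card]
  have key : Fintype.card α = ∑ q : Quotient s,
      (Finset.univ.filter fun a : α => Quotient.mk s a = q).card := by
    rw [← Finset.card_univ]
    exact Finset.card_eq_sum_card_fiberwise (fun a _ => Finset.mem_univ _)
  rw [key]
  have hq : ∀ q : Quotient s, 3 ≤ (Finset.univ.filter fun a : α => Quotient.mk s a = q).card := by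
    intro q
    obtain ⟨a, rfl⟩ := Quotient.exists_rep q
    have sub : ({a, f a, f (f a)} : Finset α) ⊆
        Finset.univ.filter fun b : α => Quotient.mk s b = Quotient.mk s a := by
      intro b hb
      simp only [Finset.mem_insert, Finset.mem_singleton] at hb
      simp only [Finset.mem_filter, Finset.mem_univ, true_and]
      rcases hb with rfl | rfl | rfl
      · rfl
      · exact (hrel a).symm
      · exact ((hrel a).trans (hrel (f a))).symm
    have hcard : ({a, f a, f (f a)} : Finset α).card = 3 := by
      rw [Finset.card_insert_of_notMem, Finset.card_insert_of_notMem, Finset.card_singleton]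
      · simp only [Finset.mem_singleton]
        intro h
        exact h1 a (f.injective h).symm
      · simp only [Finset.mem_insert, Finset.mem_singleton]
        rintro (h | h)
        · exact h1 a h.symm
        · exact h2 a h.symm
    calc 3 = ({a, f a, f (f a)} : Finset α).card := hcard.symm
      _ ≤ _ := Finset.card_le_card sub
  calc 3 * Fintype.card (Quotient s) = ∑ _q : Quotient s, 3 := by
        rw [Finset.sum_const, Finset.card_univ, smul_eq_mul, mul_comm]
      _ ≤ _ := Finset.sum_le_sum (fun q _ => hq q)

end Orbits

section Graph

variable {V : Type*} {Γ : SimpleGraph V}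

lemma NCG.rot_ne_self (R : RotationSystem Γ)
    (hdeg : ∀ v : V, ∃ w₁ w₂ : V, Γ.Adj v w₁ ∧ Γ.Adj v w₂ ∧ w₁ ≠ w₂)
    (d : Γ.Dart) : R.rot d ≠ d := by
  intro hfix
  have hpow : ∀ k : ℕ, (R.rot ^ k) d = d := by
    intro k
    induction k with
    | zero => rfl
    | succ k ih => rw [pow_succ, Equiv.Perm.mul_apply, hfix, ih]
  obtain ⟨w₁, w₂, h1, h2, hne⟩ := hdeg d.toProd.1
  have : ∃ w, Γ.Adj d.toProd.1 w ∧ w ≠ d.toProd.2 := by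
    by_cases h : w₁ = d.toProd.2
    · exact ⟨w₂, h2, fun he => hne (h.trans he.symm)⟩
    · exact ⟨w₁, h1, h⟩
  obtain ⟨w, hw, hwne⟩ := this
  obtain ⟨k, hk⟩ := R.cyclic d ⟨(d.toProd.1, w), hw⟩ rfl
  rw [hpow k] at hk
  exact hwne (congrArg (fun d : Γ.Dart => d.toProd.2) hk).symm

lemma NCG.faceMap_ne (R : RotationSystem Γ) (d : Γ.Dart) : R.rot d.symm ≠ d := by
  intro h
  have h1 : (R.rot d.symm).toProd.1 = d.toProd.2 := by
    rw [R.tail_eq]; rfl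
  rw [h] at h1
  exact d.adj.ne h1

lemma NCG.faceMap_sq_ne (R : RotationSystem Γ)
    (hdeg : ∀ v : V, ∃ w₁ w₂ : V, Γ.Adj v w₁ ∧ Γ.Adj v w₂ ∧ w₁ ≠ w₂)
    (d : Γ.Dart) : R.rot (R.rot d.symm).symm ≠ d := by
  intro h
  set e := R.rot d.symm with he
  have h1 : e.toProd.1 = d.toProd.2 := by rw [he, R.tail_eq]; rfl
  have h2 : d.toProd.1 = e.toProd.2 := by
    have := R.tail_eq e.symm
    rw [h] at this
    exact this.trans rfl
  have hed : e = d.symm := by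
    ext
    · exact h1
    · exact h2.symm
  rw [hed] at he
  exact NCG.rot_ne_self R hdeg d.symm he.symm

lemma NCG.edge_le_three_mul (Γ : SimpleGraph V) [Fintype V] [Nonempty V]
    (hdeg : ∀ v : V, ∃ w₁ w₂ : V, Γ.Adj v w₁ ∧ Γ.Adj v w₂ ∧ w₁ ≠ w₂)
    (hg : genus Γ ≤ 1) :
    Nat.card Γ.edgeSet ≤ 3 * Nat.card V := by
  classical
  obtain ⟨π, hπ1, hπ2⟩ := NCG.exists_fiber_perm (fun d : Γ.Dart => d.toProd.1)
  set S := {g : ℕ | ∃ R : RotationSystem Γ,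
    (Nat.card Γ.edgeSet : ℤ) + 2 * Nat.card Γ.ConnectedComponent
      ≤ Nat.card V + R.numFaces + 2 * g} with hS
  have hne : S.Nonempty := by
    refine ⟨Nat.card Γ.edgeSet + 2 * Nat.card Γ.ConnectedComponent, ⟨π, hπ1, hπ2⟩, ?_⟩
    push_cast
    have h1 : (0:ℤ) ≤ Nat.card Γ.edgeSet := Nat.cast_nonneg _
    have h2 : (0:ℤ) ≤ Nat.card Γ.ConnectedComponent := Nat.cast_nonneg _
    have h3 : (0:ℤ) ≤ Nat.card V := Nat.cast_nonneg _
    have h4 : (0:ℤ) ≤ (RotationSystem.mk π hπ1 hπ2 : RotationSystem Γ).numFaces :=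
      Nat.cast_nonneg _
    linarith
  have hmem : genus Γ ∈ S := Nat.sInf_mem hne
  obtain ⟨R, hR⟩ := hmem
  have hiso : Nat.card {v : V // ∀ w, ¬ Γ.Adj v w} = 0 := by
    have : IsEmpty {v : V // ∀ w, ¬ Γ.Adj v w} := by
      constructor
      rintro ⟨v, hv⟩
      obtain ⟨w₁, _, h1, _, _⟩ := hdeg v
      exact hv w₁ h1
    exact Nat.card_of_isEmpty
  have hface : 3 * Nat.card
      (Quotient (Relation.EqvGen.setoid (fun d e : Γ.Dart => R.rot d.symm = e)))
      ≤ Nat.card Γ.Dart := by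
    exact NCG.three_mul_card_quotient_le
      ((⟨SimpleGraph.Dart.symm, SimpleGraph.Dart.symm,
        Dart.symm_involutive, Dart.symm_involutive⟩ : Equiv.Perm Γ.Dart).trans R.rot)
      (fun d => NCG.faceMap_ne R d) (fun d => NCG.faceMap_sq_ne R hdeg d)
  have hdart : Nat.card Γ.Dart = 2 * Nat.card Γ.edgeSet := by
    rw [Nat.card_eq_fintype_card, Nat.card_eq_fintype_card,
      SimpleGraph.dart_card_eq_twice_card_edges, SimpleGraph.edgeFinset_card]
  have : Nonempty Γ.ConnectedComponent := ⟨Γ.connectedComponentMk (Classical.arbitrary V)⟩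
  have hcpos : 1 ≤ Nat.card Γ.ConnectedComponent := Nat.card_pos
  unfold RotationSystem.numFaces at hR
  rw [hiso] at hR
  have hgz : (genus Γ : ℤ) ≤ 1 := by exact_mod_cast hg
  rw [hdart] at hface
  have hface' : 3 * (Nat.card
      (Quotient (Relation.EqvGen.setoid (fun d e : Γ.Dart => R.rot d.symm = e))) : ℤ)
      ≤ 2 * Nat.card Γ.edgeSet := by exact_mod_cast hface
  have hcpos' : (1:ℤ) ≤ Nat.card Γ.ConnectedComponent := by exact_mod_cast hcpos
  have goal' : (Nat.card Γ.edgeSet : ℤ) ≤ 3 * Nat.card V := by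
    push_cast at hR
    linarith
  exact_mod_cast goal'

end Graph

section Group

variable {G : Type*} [Group G]

lemma NCG.notMemCenter_of_ne {a b : G} (h : a * b ≠ b * a) : a ∉ Subgroup.center G := by
  intro ha
  exact h (((Subgroup.mem_center_iff.mp ha) b).symm)

lemma NCG.nonCommGraph_deg (v : {x : G // x ∉ Subgroup.center G}) :
    ∃ w₁ w₂, (nonCommGraph G).Adj v w₁ ∧ (nonCommGraph G).Adj v w₂ ∧ w₁ ≠ w₂ := by
  obtain ⟨y, hy⟩ : ∃ y : G, ¬ y * v = v * y := by
    by_contra h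
    push_neg at h
    exact v.2 (Subgroup.mem_center_iff.mpr h)
  have hyv : (v : G) * y ≠ y * v := fun h => hy h.symm
  have hy_nc : y ∉ Subgroup.center G := NCG.notMemCenter_of_ne (b := (v : G)) hy
  have hvy_nc : (v : G) * y ∉ Subgroup.center G := by
    apply NCG.notMemCenter_of_ne (b := (v : G))
    intro h
    rw [mul_assoc] at h
    exact hy (mul_left_cancel h.symm).symm
  refine ⟨⟨y, hy_nc⟩, ⟨(v : G) * y, hvy_nc⟩, hyv, ?_, ?_⟩
  · show (v : G) * ((v : G) * y) ≠ ((v : G) * y) * (v : G)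
    intro h
    rw [mul_assoc (v : G) y (v : G)] at h
    exact hy (mul_left_cancel h).symm
  · intro h
    have hval : y = (v : G) * y := congrArg Subtype.val h
    have hv1 : (v : G) = 1 := right_eq_mul.mp hval
    exact v.2 (hv1 ▸ Subgroup.one_mem _)

/-- The darts of the non-commuting graph are the non-commuting ordered pairs. -/
def NCG.dartEquiv (G : Type*) [Group G] :
    (nonCommGraph G).Dart ≃ {p : G × G // ¬ Commute p.1 p.2} where
  toFun d := ⟨(d.toProd.1.val, d.toProd.2.val), d.adj⟩
  invFun p := ⟨(⟨p.1.1, NCG.notMemCenter_of_ne p.2⟩,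
    ⟨p.1.2, NCG.notMemCenter_of_ne (b := p.1.1) (fun h => p.2 h.symm)⟩), p.2⟩
  left_inv d := rfl
  right_inv p := rfl

lemma NCG.dart_card (G : Type*) [Group G] [Fintype G] :
    Nat.card (nonCommGraph G).Dart + Nat.card (ConjClasses G) * Nat.card G
      = Nat.card G * Nat.card G := by
  classical
  rw [Nat.card_congr (NCG.dartEquiv G), ← card_comm_eq_card_conjClasses_mul_card,
    add_comm]
  have := Nat.card_congr (Equiv.sumCompl (fun p : G × G => Commute p.1 p.2))
  rw [Nat.card_sum, Nat.card_prod] at this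
  exact this

end Group

/-- If the non-commuting graph of a finite non-abelian group `G` has genus at most `1`,
then `k(G) ≥ |G| - 5`, where `k(G)` is the number of conjugacy classes of `G`. -/
theorem conjClasses_ge_of_nonCommGraph_genus_le_one (G : Type*) [Group G] [Fintype G]
    (hna : ¬ ∀ a b : G, a * b = b * a)
    (hg : genus (nonCommGraph G) ≤ 1) :
    Nat.card G ≤ Nat.card (ConjClasses G) + 5 := by
  classical
  push_neg at hna
  obtain ⟨a, b, hab⟩ := hna
  have hvne : Nonempty {x : G // x ∉ Subgroup.center G} :=
    ⟨⟨a, NCG.notMemCenter_of_ne hab⟩⟩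
  set n := Nat.card G with hn
  set k := Nat.card (ConjClasses G) with hk
  have hE := NCG.edge_le_three_mul (nonCommGraph G) NCG.nonCommGraph_deg hg
  have hdart : Nat.card (nonCommGraph G).Dart + k * n = n * n := NCG.dart_card G
  have hdart2 : Nat.card (nonCommGraph G).Dart
      = 2 * Nat.card (nonCommGraph G).edgeSet := by
    rw [Nat.card_eq_fintype_card, Nat.card_eq_fintype_card,
      SimpleGraph.dart_card_eq_twice_card_edges, SimpleGraph.edgeFinset_card]
  have hV : Nat.card {x : G // x ∉ Subgroup.center G} < n := by
    exact Finite.card_subtype_lt (x := 1) (not_not_intro (Subgroup.one_mem _))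
  set E := Nat.card (nonCommGraph G).edgeSet with hEdef
  set Vc := Nat.card {x : G // x ∉ Subgroup.center G} with hVdef
  rw [hdart2] at hdart
  -- n*n + 6 ≤ k*n + 6*n
  have key : n * n + 6 ≤ k * n + 6 * n := by
    have h1 : 2 * E ≤ 6 * Vc := by linarith
    have h2 : Vc + 1 ≤ n := hV
    linarith
  have hmul : n * n < n * (k + 6) := by
    have : n * (k + 6) = k * n + 6 * n := by ring
    omega
  have := Nat.lt_of_mul_lt_mul_left hmul
  omega
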